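/- arXiv:2509.04116 — 5 statements merged into one kernel-verified Lean document; each statement's English description precedes it below -/
import Mathlib

section
/- For a finite set Θ, a nominal probability distribution μ on Θ, a radius R ∈ [0,1], and a function L : Θ → ℝ, the supremum of ∑_θ ν(θ)L(θ) over all probability distributions ν on Θ satisfying the total variation constraint (1/2)∑_θ |ν(θ) − μ(θ)| ≤ R is at most ∑_θ μ(θ)L(θ) + R·(max_θ L(θ) − min_θ L(θ)). -/
open Finset

/-- A probability distribution on a finite type: nonnegative and summing to 1. -/
def IsProbDist {Θ : Type*} [Fintype Θ] (μ : Θ → ℝ) : Prop :=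
  (∀ θ, 0 ≤ μ θ) ∧ ∑ θ, μ θ = 1

/-- Total variation distance between two functions on a finite type. -/
noncomputable def tvDist {Θ : Type*} [Fintype Θ] (ν μ : Θ → ℝ) : ℝ :=
  (1 / 2) * ∑ θ, |ν θ - μ θ|

theorem stmt0 {Θ : Type*} [Fintype Θ] [Nonempty Θ]
    (μ : Θ → ℝ) (hμ : IsProbDist μ) (R : ℝ) (hR : R ∈ Set.Icc (0 : ℝ) 1)
    (L : Θ → ℝ) :
    ∀ ν : Θ → ℝ, IsProbDist ν → tvDist ν μ ≤ R →
      ∑ θ, ν θ * L θ ≤ ∑ θ, μ θ * L θ +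
        R * (Finset.univ.sup' Finset.univ_nonempty L -
             Finset.univ.inf' Finset.univ_nonempty L) := by
  intro ν hν htv
  set M := Finset.univ.sup' Finset.univ_nonempty L with hM
  set m := Finset.univ.inf' Finset.univ_nonempty L with hm
  set c := (m + M) / 2 with hc
  have hmM : m ≤ M := by
    obtain ⟨θ⟩ := ‹Nonempty Θ›
    exact le_trans (Finset.inf'_le _ (Finset.mem_univ θ))
      (Finset.le_sup' _ (Finset.mem_univ θ))
  have habs : ∀ θ, |L θ - c| ≤ (M - m) / 2 := by
    intro θ
    rw [abs_le]
    constructor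
    · have := Finset.inf'_le (b := θ) L (Finset.mem_univ θ)
      rw [hc]; linarith
    · have := Finset.le_sup' (b := θ) L (Finset.mem_univ θ)
      rw [hc]; linarith
  have hsum : ∑ θ, ν θ * L θ - ∑ θ, μ θ * L θ = ∑ θ, (ν θ - μ θ) * (L θ - c) := by
    have h1 : ∑ θ, (ν θ - μ θ) * (L θ - c)
        = ∑ θ, ν θ * L θ - ∑ θ, μ θ * L θ - c * (∑ θ, ν θ - ∑ θ, μ θ) := by
      rw [← Finset.sum_sub_distrib, ← Finset.sum_sub_distrib, Finset.mul_sum,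
        ← Finset.sum_sub_distrib]
      apply Finset.sum_congr rfl
      intro θ _; ring
    rw [h1, hν.2, hμ.2]; ring
  have hbound : ∑ θ, (ν θ - μ θ) * (L θ - c) ≤ ((M - m) / 2) * ∑ θ, |ν θ - μ θ| := by
    rw [Finset.mul_sum]
    apply Finset.sum_le_sum
    intro θ _
    calc (ν θ - μ θ) * (L θ - c) ≤ |(ν θ - μ θ) * (L θ - c)| := le_abs_self _
      _ = |ν θ - μ θ| * |L θ - c| := abs_mul _ _
      _ ≤ |ν θ - μ θ| * ((M - m) / 2) := by
          exact mul_le_mul_of_nonneg_left (habs θ) (abs_nonneg _)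
      _ = (M - m) / 2 * |ν θ - μ θ| := by ring
  have htv' : (1 / 2) * ∑ θ, |ν θ - μ θ| ≤ R := htv
  have hfin : ((M - m) / 2) * ∑ θ, |ν θ - μ θ| ≤ R * (M - m) := by
    have := mul_le_mul_of_nonneg_left htv' (by linarith : (0:ℝ) ≤ M - m)
    nlinarith [this]
  linarith [hsum, hbound, hfin]
end

section
/- For a finite set Θ, a nominal probability distribution μ on Θ, a radius R ∈ [0,1], and a function L : Θ → ℝ, let α = min(R, 1 − ∑_{θ ∈ Θmax} μ(θ)), where Θmax is the set of maximizers of L. If α ≤ ∑_{θ ∈ Θmin} μ(θ), where Θmin is the set of minimizers of L, then the supremum of ∑_θ ν(θ)L(θ) over probability distributions ν with (1/2)∑_θ|ν(θ)−μ(θ)| ≤ R equals ∑_θ μ(θ)L(θ) + α·(max_θ L(θ) − min_θ L(θ)). -/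
open Finset

open scoped Classical in
theorem stmt1 {Θ : Type*} [Fintype Θ] [Nonempty Θ]
    (μ : Θ → ℝ) (hμ : IsProbDist μ) (R : ℝ) (hR : R ∈ Set.Icc (0 : ℝ) 1)
    (L : Θ → ℝ)
    (Lmax Lmin : ℝ)
    (hLmax : Lmax = Finset.univ.sup' Finset.univ_nonempty L)
    (hLmin : Lmin = Finset.univ.inf' Finset.univ_nonempty L)
    (α : ℝ)
    (hα : α = min R (1 - ∑ θ ∈ Finset.univ.filter (fun θ => L θ = Lmax), μ θ))
    (hcase : α ≤ ∑ θ ∈ Finset.univ.filter (fun θ => L θ = Lmin), μ θ) :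
    sSup {x : ℝ | ∃ ν : Θ → ℝ, IsProbDist ν ∧ tvDist ν μ ≤ R ∧ x = ∑ θ, ν θ * L θ}
      = ∑ θ, μ θ * L θ + α * (Lmax - Lmin) := by
  obtain ⟨hμ0, hμ1⟩ := hμ
  set M : ℝ := ∑ θ ∈ Finset.univ.filter (fun θ => L θ = Lmax), μ θ with hM
  set m : ℝ := ∑ θ ∈ Finset.univ.filter (fun θ => L θ = Lmin), μ θ with hm
  have hLle : ∀ θ, L θ ≤ Lmax := fun θ => hLmax ▸ Finset.le_sup' L (mem_univ θ)
  have hLge : ∀ θ, Lmin ≤ L θ := fun θ => hLmin ▸ Finset.inf'_le L (mem_univ θ)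
  have hc : (0 : ℝ) ≤ Lmax - Lmin := by
    obtain ⟨θ⟩ := (inferInstance : Nonempty Θ)
    have := hLge θ; have := hLle θ; linarith
  have hM1 : M ≤ 1 := by
    rw [hM, ← hμ1]
    exact Finset.sum_le_sum_of_subset_of_nonneg (Finset.filter_subset _ _)
      (fun θ _ _ => hμ0 θ)
  have hα0 : (0 : ℝ) ≤ α := by
    rw [hα]; exact le_min hR.1 (by linarith)
  have hαR : α ≤ R := hα ▸ min_le_left _ _
  have hαM : α ≤ 1 - M := hα ▸ min_le_right _ _
  -- key identity: M * Lmax + (1 - M) * Lmin ≤ ∑ μ L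
  have hμLlb : M * Lmax + (1 - M) * Lmin ≤ ∑ θ, μ θ * L θ := by
    have hsplit := Finset.sum_filter_add_sum_filter_not Finset.univ
      (fun θ => L θ = Lmax) (fun θ => μ θ * L θ)
    have h1 : ∑ θ ∈ Finset.univ.filter (fun θ => L θ = Lmax), μ θ * L θ = M * Lmax := by
      rw [hM, Finset.sum_mul]
      refine Finset.sum_congr rfl fun θ hθ => ?_
      rw [(Finset.mem_filter.mp hθ).2]
    have h2 : (1 - M) * Lmin ≤
        ∑ θ ∈ Finset.univ.filter (fun θ => ¬ L θ = Lmax), μ θ * L θ := by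
      have hcompl : ∑ θ ∈ Finset.univ.filter (fun θ => ¬ L θ = Lmax), μ θ = 1 - M := by
        have := Finset.sum_filter_add_sum_filter_not Finset.univ
          (fun θ => L θ = Lmax) μ
        rw [hμ1] at this; linarith [this]
      calc (1 - M) * Lmin
          = ∑ θ ∈ Finset.univ.filter (fun θ => ¬ L θ = Lmax), μ θ * Lmin := by
            rw [← Finset.sum_mul, hcompl]
        _ ≤ _ := Finset.sum_le_sum fun θ _ =>
            mul_le_mul_of_nonneg_left (hLge θ) (hμ0 θ)
    linarith [hsplit]
  set S : Set ℝ :=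
    {x : ℝ | ∃ ν : Θ → ℝ, IsProbDist ν ∧ tvDist ν μ ≤ R ∧ x = ∑ θ, ν θ * L θ} with hS
  -- upper bound
  have hub : ∀ x ∈ S, x ≤ ∑ θ, μ θ * L θ + α * (Lmax - Lmin) := by
    rintro x ⟨ν, ⟨hν0, hν1⟩, htv, rfl⟩
    have hνμ : ∑ θ, (ν θ - μ θ) = 0 := by
      rw [Finset.sum_sub_distrib, hν1, hμ1]; ring
    have habs : ∑ θ, |ν θ - μ θ| ≤ 2 * R := by
      have : (1 / 2 : ℝ) * ∑ θ, |ν θ - μ θ| ≤ R := htv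
      linarith
    -- Bound A
    have hA : ∑ θ, ν θ * L θ ≤ ∑ θ, μ θ * L θ + R * (Lmax - Lmin) := by
      have hid : ∑ θ, (ν θ - μ θ) * (L θ - Lmin)
          = ∑ θ, ν θ * L θ - ∑ θ, μ θ * L θ := by
        have : ∀ θ, (ν θ - μ θ) * (L θ - Lmin)
            = ν θ * L θ - μ θ * L θ - (ν θ - μ θ) * Lmin := by intro θ; ring
        rw [Finset.sum_congr rfl fun θ _ => this θ, Finset.sum_sub_distrib,
          Finset.sum_sub_distrib, ← Finset.sum_mul, hνμ]
        ring
      have hterm : ∀ θ, (ν θ - μ θ) * (L θ - Lmin)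
          ≤ ((|ν θ - μ θ| + (ν θ - μ θ)) / 2) * (Lmax - Lmin) := by
        intro θ
        rcases le_or_gt 0 (ν θ - μ θ) with h | h
        · rw [abs_of_nonneg h]
          have h1 : L θ - Lmin ≤ Lmax - Lmin := by have := hLle θ; linarith
          have := mul_le_mul_of_nonneg_left h1 h
          linarith
        · rw [abs_of_neg h]
          have h1 : (ν θ - μ θ) * (L θ - Lmin) ≤ 0 :=
            mul_nonpos_of_nonpos_of_nonneg h.le (by have := hLge θ; linarith)
          have h2 : ((-(ν θ - μ θ) + (ν θ - μ θ)) / 2) * (Lmax - Lmin) = 0 := by ring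
          linarith
      have hsum : ∑ θ, ((|ν θ - μ θ| + (ν θ - μ θ)) / 2) * (Lmax - Lmin)
          ≤ R * (Lmax - Lmin) := by
        have : ∑ θ, ((|ν θ - μ θ| + (ν θ - μ θ)) / 2) * (Lmax - Lmin)
            = ((∑ θ, |ν θ - μ θ|) + ∑ θ, (ν θ - μ θ)) / 2 * (Lmax - Lmin) := by
          rw [← Finset.sum_mul, ← Finset.sum_div, Finset.sum_add_distrib]
        rw [this, hνμ]
        have h1 : (∑ θ, |ν θ - μ θ| + 0) / 2 ≤ R := by linarith
        exact mul_le_mul_of_nonneg_right h1 hc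
      have := Finset.sum_le_sum fun θ (_ : θ ∈ Finset.univ) => hterm θ
      linarith [hid ▸ le_trans this hsum]
    -- Bound B
    have hB : ∑ θ, ν θ * L θ ≤ ∑ θ, μ θ * L θ + (1 - M) * (Lmax - Lmin) := by
      have hνmax : ∑ θ, ν θ * L θ ≤ Lmax := by
        calc ∑ θ, ν θ * L θ ≤ ∑ θ, ν θ * Lmax :=
              Finset.sum_le_sum fun θ _ =>
                mul_le_mul_of_nonneg_left (hLle θ) (hν0 θ)
          _ = Lmax := by rw [← Finset.sum_mul, hν1, one_mul]
      nlinarith [hμLlb]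
    have hmin : α * (Lmax - Lmin) = min (R * (Lmax - Lmin)) ((1 - M) * (Lmax - Lmin)) := by
      rw [hα, min_mul_of_nonneg _ _ hc]
    rw [hmin]
    rcases min_cases (R * (Lmax - Lmin)) ((1 - M) * (Lmax - Lmin)) with ⟨h, _⟩ | ⟨h, _⟩ <;>
      rw [h] <;> linarith
  -- membership: the bound is attained
  have hmem : (∑ θ, μ θ * L θ + α * (Lmax - Lmin)) ∈ S := by
    rcases eq_or_lt_of_le hc with hdeg | hlt
    · -- Lmax = Lmin
      refine ⟨μ, ⟨hμ0, hμ1⟩, ?_, ?_⟩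
      · simp [tvDist]; exact hR.1
      · rw [← hdeg]; ring
    rcases eq_or_lt_of_le (hα0.trans hcase) with hm0 | hmpos
    · -- m = 0 forces α = 0
      have hα0' : α = 0 := le_antisymm (hm0 ▸ hcase) hα0
      refine ⟨μ, ⟨hμ0, hμ1⟩, ?_, ?_⟩
      · simp [tvDist]; exact hR.1
      · rw [hα0']; ring
    · -- main construction
      obtain ⟨θs, -, hθs⟩ := Finset.exists_mem_eq_sup' (Finset.univ_nonempty (α := Θ)) L
      have hθsmax : L θs = Lmax := by rw [hLmax, hθs]
      have hθsnotmin : ¬ L θs = Lmin := by rw [hθsmax]; intro h; linarith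
      have hmne : m ≠ 0 := ne_of_gt hmpos
      set ν : Θ → ℝ := fun θ =>
        (if L θ = Lmin then μ θ * (1 - α / m) else μ θ) + (if θ = θs then α else 0) with hν
      have hfrac0 : 0 ≤ 1 - α / m := by
        have : α / m ≤ 1 := (div_le_one hmpos).mpr hcase
        linarith
      have hν0 : ∀ θ, 0 ≤ ν θ := by
        intro θ
        have h1 : 0 ≤ (if L θ = Lmin then μ θ * (1 - α / m) else μ θ) := by
          split
          · exact mul_nonneg (hμ0 θ) hfrac0
          · exact hμ0 θ
        have h2 : 0 ≤ (if θ = θs then α else 0) := by split <;> simp [hα0]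
        simp only [hν]; linarith
      have hd : ∀ θ, ν θ - μ θ =
          (if L θ = Lmin then μ θ * (-(α / m)) else 0) + (if θ = θs then α else 0) := by
        intro θ
        by_cases h1 : L θ = Lmin
        · have h2 : θ ≠ θs := fun h => hθsnotmin (h ▸ h1)
          simp only [hν, h1, if_true, h2, if_neg, if_false]
          ring
        · simp only [hν, h1, if_false]
          ring
      have hsum1 : ∑ θ, (if L θ = Lmin then μ θ * (-(α / m)) else 0) = -α := by
        rw [← Finset.sum_filter, ← Finset.sum_mul, ← hm]
        field_simp
      have hsum2 : ∑ θ, (if θ = θs then α else 0) = α := by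
        rw [Finset.sum_ite_eq' Finset.univ θs (fun _ => α)]
        simp
      have hdsum : ∑ θ, (ν θ - μ θ) = 0 := by
        rw [Finset.sum_congr rfl fun θ _ => hd θ, Finset.sum_add_distrib, hsum1, hsum2]
        ring
      have hν1 : ∑ θ, ν θ = 1 := by
        have h := Finset.sum_sub_distrib (f := ν) (g := μ) (s := Finset.univ)
        rw [hdsum, hμ1] at h
        linarith
      have htv : tvDist ν μ ≤ R := by
        have habs : ∀ θ, |ν θ - μ θ| =
            (if L θ = Lmin then μ θ * (α / m) else 0) + (if θ = θs then α else 0) := by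
          intro θ
          rw [hd θ]
          by_cases h1 : L θ = Lmin
          · have h2 : θ ≠ θs := fun h => hθsnotmin (h ▸ h1)
            simp only [h1, if_true, h2, if_neg, if_false, add_zero]
            rw [abs_of_nonpos (by
              have := hμ0 θ
              have : 0 ≤ μ θ * (α / m) := mul_nonneg (hμ0 θ) (div_nonneg hα0 hmpos.le)
              linarith)]
            ring
          · simp only [h1, if_false, zero_add]
            split
            · rw [abs_of_nonneg hα0]
            · simp
        have hsum1' : ∑ θ, (if L θ = Lmin then μ θ * (α / m) else 0) = α := by
          rw [← Finset.sum_filter, ← Finset.sum_mul, ← hm]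
          field_simp
        have : ∑ θ, |ν θ - μ θ| = 2 * α := by
          rw [Finset.sum_congr rfl fun θ _ => habs θ, Finset.sum_add_distrib,
            hsum1', hsum2]
          ring
        rw [tvDist, this]
        linarith
      have hval : ∑ θ, ν θ * L θ = ∑ θ, μ θ * L θ + α * (Lmax - Lmin) := by
        have hdL : ∀ θ, (ν θ - μ θ) * L θ =
            (if L θ = Lmin then μ θ * (-(α / m) * Lmin) else 0)
              + (if θ = θs then α * Lmax else 0) := by
          intro θ
          rw [hd θ]
          by_cases h1 : L θ = Lmin
          · have h2 : θ ≠ θs := fun h => hθsnotmin (h ▸ h1)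
            simp only [h1, if_true, h2, if_neg, if_false, add_zero]
            ring
          · simp only [h1, if_false, zero_add]
            by_cases h2 : θ = θs
            · simp only [h2, if_true]
              rw [show L θs = Lmax from hθsmax]
            · simp [h2]
        have hs1 : ∑ θ, (if L θ = Lmin then μ θ * (-(α / m) * Lmin) else 0)
            = -(α * Lmin) := by
          rw [← Finset.sum_filter, ← Finset.sum_mul, ← hm]
          field_simp
        have hs2 : ∑ θ, (if θ = θs then α * Lmax else 0) = α * Lmax := by
          rw [Finset.sum_ite_eq' Finset.univ θs (fun _ => α * Lmax)]
          simp
        have hdLsum : ∑ θ, (ν θ - μ θ) * L θ = α * (Lmax - Lmin) := by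
          rw [Finset.sum_congr rfl fun θ _ => hdL θ, Finset.sum_add_distrib, hs1, hs2]
          ring
        have hexp : ∑ θ, (ν θ - μ θ) * L θ = ∑ θ, ν θ * L θ - ∑ θ, μ θ * L θ := by
          rw [← Finset.sum_sub_distrib]
          exact Finset.sum_congr rfl fun θ _ => by ring
        linarith [hexp ▸ hdLsum]
      exact ⟨ν, ⟨hν0, hν1⟩, htv, hval.symm⟩
  -- conclude
  have hne : S.Nonempty := ⟨_, hmem⟩
  have hbdd : BddAbove S := ⟨_, hub⟩
  exact le_antisymm (csSup_le hne hub) (le_csSup hbdd hmem)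
end

section
/- Let Θ be a finite set, μ a probability distribution on Θ, R ∈ [0,1], and L : Θ → ℝ nonconstant. Define Θmax as the set of maximizers of L, Θmin as the set of minimizers, α = min(R, 1 − μ(Θmax)), and suppose α ≤ μ(Θmin). Define ν* by ν*(θ) = μ(θ) + α·μ(θ)/μ(Θmax) for θ ∈ Θmax (assuming μ(Θmax) > 0), ν*(θ) = μ(θ) − α·μ(θ)/μ(Θmin) for θ ∈ Θmin (assuming μ(Θmin) > 0), and ν*(θ) = μ(θ) otherwise. Then ν* is a probability distribution on Θ lying in the total variation ball of radius R around μ. -/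
open Finset

open scoped Classical in
theorem stmt2 {Θ : Type*} [Fintype Θ] [Nonempty Θ]
    (μ : Θ → ℝ) (hμ : IsProbDist μ) (R : ℝ) (hR : R ∈ Set.Icc (0 : ℝ) 1)
    (L : Θ → ℝ) (hL : ∃ θ θ' : Θ, L θ ≠ L θ')
    (Lmax Lmin : ℝ)
    (hLmax : Lmax = Finset.univ.sup' Finset.univ_nonempty L)
    (hLmin : Lmin = Finset.univ.inf' Finset.univ_nonempty L)
    (Mmax Mmin : ℝ)
    (hMmax : Mmax = ∑ θ ∈ Finset.univ.filter (fun θ => L θ = Lmax), μ θ)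
    (hMmin : Mmin = ∑ θ ∈ Finset.univ.filter (fun θ => L θ = Lmin), μ θ)
    (hMmaxpos : 0 < Mmax) (hMminpos : 0 < Mmin)
    (α : ℝ) (hα : α = min R (1 - Mmax)) (hcase : α ≤ Mmin)
    (νstar : Θ → ℝ)
    (hν : νstar = fun θ =>
      if L θ = Lmax then μ θ + α * μ θ / Mmax
      else if L θ = Lmin then μ θ - α * μ θ / Mmin
      else μ θ) :
    IsProbDist νstar ∧ tvDist νstar μ ≤ R := by
  obtain ⟨hμ0, hμ1⟩ := hμ
  have hMmax1 : Mmax ≤ 1 := by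
    rw [hMmax, ← hμ1]
    exact Finset.sum_le_sum_of_subset_of_nonneg (Finset.filter_subset _ _)
      (fun i _ _ => hμ0 i)
  have hα0 : 0 ≤ α := by rw [hα]; exact le_min hR.1 (by linarith)
  have hαR : α ≤ R := hα ▸ min_le_left _ _
  have hne : Lmax ≠ Lmin := by
    intro h
    obtain ⟨θ, θ', hθ⟩ := hL
    have h1 : L θ ≤ Lmax := hLmax ▸ Finset.le_sup' L (mem_univ θ)
    have h2 : Lmin ≤ L θ := hLmin ▸ Finset.inf'_le L (mem_univ θ)
    have h3 : L θ' ≤ Lmax := hLmax ▸ Finset.le_sup' L (mem_univ θ')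
    have h4 : Lmin ≤ L θ' := hLmin ▸ Finset.inf'_le L (mem_univ θ')
    exact hθ (by linarith)
  have hsumA : ∑ θ, (if L θ = Lmax then α * μ θ / Mmax else 0) = α := by
    rw [← Finset.sum_filter, ← Finset.sum_div, ← Finset.mul_sum, ← hMmax]
    field_simp
  have hsumB : ∑ θ, (if L θ = Lmin then α * μ θ / Mmin else 0) = α := by
    rw [← Finset.sum_filter, ← Finset.sum_div, ← Finset.mul_sum, ← hMmin]
    field_simp
  have hdiff : ∀ θ, νstar θ - μ θ =
      (if L θ = Lmax then α * μ θ / Mmax else 0) +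
      (if L θ = Lmin then -(α * μ θ / Mmin) else 0) := by
    intro θ
    simp only [hν]
    by_cases h1 : L θ = Lmax
    · have h2 : ¬ L θ = Lmin := fun h => hne (h1.symm.trans h)
      rw [if_pos h1, if_pos h1, if_neg h2]; ring
    · by_cases h2 : L θ = Lmin
      · rw [if_neg h1, if_neg h1, if_pos h2, if_pos h2]; ring
      · rw [if_neg h1, if_neg h1, if_neg h2, if_neg h2]; ring
  have habs : ∀ θ, |νstar θ - μ θ| =
      (if L θ = Lmax then α * μ θ / Mmax else 0) +
      (if L θ = Lmin then α * μ θ / Mmin else 0) := by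
    intro θ
    rw [hdiff θ]
    have hμθ := hμ0 θ
    by_cases h1 : L θ = Lmax
    · have h2 : ¬ L θ = Lmin := fun h => hne (h1.symm.trans h)
      rw [if_pos h1, if_neg h2, if_neg h2]
      simp only [add_zero]
      exact abs_of_nonneg (by positivity)
    · by_cases h2 : L θ = Lmin
      · rw [if_neg h1, if_pos h2, if_pos h2]
        simp only [zero_add]
        rw [abs_neg]
        exact abs_of_nonneg (by positivity)
      · rw [if_neg h1, if_neg h2, if_neg h2]; simp
  have hnegB : ∑ θ, (if L θ = Lmin then -(α * μ θ / Mmin) else 0) = -α := by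
    have h : ∑ θ, (if L θ = Lmin then -(α * μ θ / Mmin) else 0)
        = -∑ θ, (if L θ = Lmin then α * μ θ / Mmin else 0) := by
      rw [← Finset.sum_neg_distrib]
      apply Finset.sum_congr rfl
      intro θ _
      split <;> simp
    rw [h, hsumB]
  have hsumδ : ∑ θ, (νstar θ - μ θ) = 0 := by
    calc ∑ θ, (νstar θ - μ θ)
        = ∑ θ, ((if L θ = Lmax then α * μ θ / Mmax else 0) +
            (if L θ = Lmin then -(α * μ θ / Mmin) else 0)) :=
          Finset.sum_congr rfl (fun θ _ => hdiff θ)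
      _ = ∑ θ, (if L θ = Lmax then α * μ θ / Mmax else 0) +
            ∑ θ, (if L θ = Lmin then -(α * μ θ / Mmin) else 0) := Finset.sum_add_distrib
      _ = α + -α := by rw [hsumA, hnegB]
      _ = 0 := by ring
  constructor
  · constructor
    · intro θ
      simp only [hν]
      by_cases h1 : L θ = Lmax
      · rw [if_pos h1]
        have := hμ0 θ
        positivity
      · by_cases h2 : L θ = Lmin
        · rw [if_neg h1, if_pos h2, sub_nonneg, div_le_iff₀ hMminpos]
          nlinarith [mul_le_mul_of_nonneg_right hcase (hμ0 θ)]
        · rw [if_neg h1, if_neg h2]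
          exact hμ0 θ
    · have : ∑ θ, νstar θ = ∑ θ, (νstar θ - μ θ) + ∑ θ, μ θ := by
        rw [← Finset.sum_add_distrib]; simp
      rw [this, hsumδ, hμ1]; ring
  · have hsumabs : ∑ θ, |νstar θ - μ θ| = 2 * α := by
      calc ∑ θ, |νstar θ - μ θ|
          = ∑ θ, ((if L θ = Lmax then α * μ θ / Mmax else 0) +
              (if L θ = Lmin then α * μ θ / Mmin else 0)) :=
            Finset.sum_congr rfl (fun θ _ => habs θ)
        _ = ∑ θ, (if L θ = Lmax then α * μ θ / Mmax else 0) +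
              ∑ θ, (if L θ = Lmin then α * μ θ / Mmin else 0) := Finset.sum_add_distrib
        _ = 2 * α := by rw [hsumA, hsumB]; ring
    rw [tvDist, hsumabs]
    linarith
end

section
/- Let p_1,…,p_m be probability measures on ℝ^n with finite second moments, B a nonempty convex compact subset of the probability simplex in ℝ^m, and V(c,ν) = ∑_i ν(i)∫‖x−c‖² dp_i(x). Then min over c ∈ ℝ^n of max over ν ∈ B of V(c,ν) equals max over ν ∈ B of min over c ∈ ℝ^n of V(c,ν) (the minimax equality / strong duality holds). -/
open MeasureTheory

theorem stmt9 {n m : ℕ}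
    (p : Fin m → Measure (EuclideanSpace ℝ (Fin n)))
    (hprob : ∀ i, IsProbabilityMeasure (p i))
    (hp2 : ∀ i, Integrable (fun x => ‖x‖ ^ 2) (p i))
    (B : Set (Fin m → ℝ)) (hBne : B.Nonempty)
    (hBconv : Convex ℝ B) (hBcomp : IsCompact B)
    (hBsimplex : B ⊆ {ν : Fin m → ℝ | (∀ i, 0 ≤ ν i) ∧ ∑ i, ν i = 1})
    (V : EuclideanSpace ℝ (Fin n) → (Fin m → ℝ) → ℝ)
    (hV : ∀ c ν, V c ν = ∑ i, ν i * ∫ x, ‖x - c‖ ^ 2 ∂(p i)) :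
    ⨅ c : EuclideanSpace ℝ (Fin n), ⨆ ν : B, V c ν
      = ⨆ ν : B, ⨅ c : EuclideanSpace ℝ (Fin n), V c ν := by
  classical
  haveI : Nonempty B := hBne.to_subtype
  -- integrability of the identity
  have hμint : ∀ i, Integrable (fun x : EuclideanSpace ℝ (Fin n) => x) (p i) := by
    intro i
    refine ((hp2 i).add (integrable_const 1)).mono' aestronglyMeasurable_id ?_
    filter_upwards with x
    simp only [Pi.add_apply]
    nlinarith [norm_nonneg x, sq_nonneg (‖x‖ - 1)]
  set M : Fin m → ℝ := fun i => ∫ x, ‖x‖ ^ 2 ∂ p i with hMdef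
  set μ : Fin m → EuclideanSpace ℝ (Fin n) := fun i => ∫ x, x ∂ p i with hμdef
  set A : (Fin m → ℝ) → ℝ := fun ν => ∑ i, ν i * M i with hAdef
  set b : (Fin m → ℝ) → EuclideanSpace ℝ (Fin n) := fun ν => ∑ i, ν i • μ i with hbdef
  set f : (Fin m → ℝ) → ℝ := fun ν => A ν - ‖b ν‖ ^ 2 with hfdef
  -- the second-moment expansion of each integral
  have hIc : ∀ (i : Fin m) (c : EuclideanSpace ℝ (Fin n)),
      ∫ x, ‖x - c‖ ^ 2 ∂ p i = M i - 2 * inner ℝ (μ i) c + ‖c‖ ^ 2 := by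
    intro i c
    haveI := hprob i
    have hInt2 : Integrable (fun x : EuclideanSpace ℝ (Fin n) => (inner ℝ x c : ℝ)) (p i) :=
      (hμint i).inner_const c
    have step1 : ∫ x, ‖x - c‖ ^ 2 ∂ p i
        = ∫ x, (‖x‖ ^ 2 - 2 * inner ℝ x c + ‖c‖ ^ 2) ∂ p i := by
      congr 1; ext x; exact norm_sub_sq_real x c
    rw [step1,
      integral_add (f := fun x : EuclideanSpace ℝ (Fin n) => ‖x‖ ^ 2 - 2 * inner ℝ x c)
        (g := fun _ => ‖c‖ ^ 2) ((hp2 i).sub (hInt2.const_mul 2)) (integrable_const _),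
      integral_sub (f := fun x : EuclideanSpace ℝ (Fin n) => ‖x‖ ^ 2)
        (g := fun x : EuclideanSpace ℝ (Fin n) => 2 * inner ℝ x c) (hp2 i) (hInt2.const_mul 2)]
    have h3 : ∫ x, 2 * (inner ℝ x c : ℝ) ∂ p i = 2 * inner ℝ (μ i) c := by
      rw [integral_const_mul]
      congr 1
      have : ∀ x : EuclideanSpace ℝ (Fin n), (inner ℝ x c : ℝ) = inner ℝ c x := fun x =>
        real_inner_comm c x
      rw [show (fun x : EuclideanSpace ℝ (Fin n) => (inner ℝ x c : ℝ))
          = fun x => (inner ℝ c x : ℝ) from funext this]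
      rw [integral_inner (hμint i) c]
      exact real_inner_comm (μ i) c
    rw [h3]
    simp [hMdef]
  -- key identity: V c ν = f ν + ‖c - b ν‖²  for ν in the simplex
  have key : ∀ (c : EuclideanSpace ℝ (Fin n)) (ν : Fin m → ℝ), ν ∈ B →
      V c ν = f ν + ‖c - b ν‖ ^ 2 := by
    intro c ν hν
    obtain ⟨hν0, hν1⟩ := hBsimplex hν
    rw [hV]
    have hexp : ∑ i, ν i * ∫ x, ‖x - c‖ ^ 2 ∂ p i
        = (∑ i, ν i * M i) - 2 * (∑ i, ν i * inner ℝ (μ i) c) + (∑ i, ν i) * ‖c‖ ^ 2 := by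
      rw [Finset.sum_mul, Finset.mul_sum, ← Finset.sum_sub_distrib, ← Finset.sum_add_distrib]
      refine Finset.sum_congr rfl fun i _ => ?_
      rw [hIc i c]; ring
    have hbc : ∑ i, ν i * (inner ℝ (μ i) c : ℝ) = inner ℝ (b ν) c := by
      rw [hbdef]; simp only
      rw [sum_inner]
      exact Finset.sum_congr rfl fun i _ => (real_inner_smul_left (μ i) c (ν i)).symm
    rw [hexp, hbc, hν1]
    have h4 := norm_sub_sq_real c (b ν)
    have h5 := real_inner_comm c (b ν)
    simp only [hfdef, hAdef]
    linarith
  -- f is continuous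
  have hbcont : Continuous b := by
    rw [hbdef]
    exact continuous_finset_sum _ fun i _ => (continuous_apply i).smul continuous_const
  have hfcont : Continuous f := by
    rw [hfdef]
    exact (continuous_finset_sum _ fun i _ => (continuous_apply i).mul continuous_const).sub
      ((hbcont.norm).pow 2)
  -- maximizer of f on B
  obtain ⟨νs, hνsB, hmax⟩ := hBcomp.exists_isMaxOn hBne hfcont.continuousOn
  have hmax' : ∀ ν ∈ B, f ν ≤ f νs := fun ν hν => hmax hν
  -- linearity of A and b
  have hAlin : ∀ (t : ℝ) (ν : Fin m → ℝ), A ((1 - t) • νs + t • ν)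
      = (1 - t) * A νs + t * A ν := by
    intro t ν
    simp only [hAdef, Finset.mul_sum, ← Finset.sum_add_distrib]
    refine Finset.sum_congr rfl fun i _ => ?_
    simp only [Pi.add_apply, Pi.smul_apply, smul_eq_mul]; ring
  have hblin : ∀ (t : ℝ) (ν : Fin m → ℝ), b ((1 - t) • νs + t • ν)
      = (1 - t) • b νs + t • b ν := by
    intro t ν
    simp only [hbdef, Finset.smul_sum, ← Finset.sum_add_distrib]
    refine Finset.sum_congr rfl fun i _ => ?_
    simp only [Pi.add_apply, Pi.smul_apply, smul_eq_mul]
    rw [add_smul, mul_smul, mul_smul]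
  -- the saddle point inequality
  have claim : ∀ ν ∈ B, V (b νs) ν ≤ f νs := by
    intro ν hν
    set w : EuclideanSpace ℝ (Fin n) := b ν - b νs with hwdef
    set L : ℝ := (A ν - A νs) - 2 * inner ℝ (b νs) w with hLdef
    have ht : ∀ t : ℝ, 0 < t → t ≤ 1 → t * L ≤ t ^ 2 * ‖w‖ ^ 2 := by
      intro t ht0 ht1
      have hmem : (1 - t) • νs + t • ν ∈ B :=
        hBconv hνsB hν (by linarith) ht0.le (by ring)
      have hle := hmax' _ hmem
      have hb1 : b ((1 - t) • νs + t • ν) = b νs + t • w := by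
        rw [hblin t ν, hwdef]
        rw [sub_smul, one_smul, smul_sub]
        abel
      have hnorm : ‖b νs + t • w‖ ^ 2
          = ‖b νs‖ ^ 2 + 2 * (t * inner ℝ (b νs) w) + t ^ 2 * ‖w‖ ^ 2 := by
        rw [norm_add_sq_real, real_inner_smul_right, norm_smul]
        simp [mul_pow, sq_abs]
      rw [hfdef] at hle
      simp only at hle
      rw [hAlin t ν, hb1, hnorm] at hle
      rw [hLdef]
      nlinarith
    have hL : L ≤ 0 := by
      by_contra hc
      push_neg at hc
      rcases eq_or_lt_of_le (sq_nonneg ‖w‖) with hw | hw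
      · have := ht 1 one_pos le_rfl
        rw [← hw] at this
        nlinarith
      · set t : ℝ := min 1 (L / (2 * ‖w‖ ^ 2)) with htdef
        have ht0 : 0 < t := lt_min one_pos (by positivity)
        have h1 := ht t ht0 (min_le_left _ _)
        have h2 : t ≤ L / (2 * ‖w‖ ^ 2) := min_le_right _ _
        have h3 : t * ‖w‖ ^ 2 ≤ L / 2 := by
          have : t * ‖w‖ ^ 2 ≤ (L / (2 * ‖w‖ ^ 2)) * ‖w‖ ^ 2 := by nlinarith
          calc t * ‖w‖ ^ 2 ≤ (L / (2 * ‖w‖ ^ 2)) * ‖w‖ ^ 2 := this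
            _ = L / 2 := by rw [div_mul_eq_mul_div, mul_div_mul_right _ _ hw.ne']
        nlinarith
    rw [key (b νs) ν hν]
    have h6 : ‖b νs - b ν‖ ^ 2 = ‖w‖ ^ 2 := by rw [hwdef, ← norm_neg]; congr 1; abel
    have h7 : ‖w‖ ^ 2 = ‖b ν‖ ^ 2 - 2 * inner ℝ (b ν) (b νs) + ‖b νs‖ ^ 2 := by
      rw [hwdef]; exact norm_sub_sq_real _ _
    have h8 : (inner ℝ (b νs) w : ℝ) = inner ℝ (b νs) (b ν) - ‖b νs‖ ^ 2 := by
      rw [hwdef, inner_sub_right, real_inner_self_eq_norm_sq]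
    have h9 := real_inner_comm (b ν) (b νs)
    rw [hLdef] at hL
    rw [h8] at hL
    simp only [hfdef]
    rw [show (b νs - b ν) = -w by rw [hwdef]; abel, norm_neg]
    linarith
  -- V c ν ≥ f ν always
  have hVge : ∀ (c : EuclideanSpace ℝ (Fin n)) (ν : Fin m → ℝ), ν ∈ B → f ν ≤ V c ν := by
    intro c ν hν
    rw [key c ν hν]
    exact le_add_of_nonneg_right (sq_nonneg _)
  -- inner ℝ infimum
  have hinf : ∀ ν ∈ B, (⨅ c : EuclideanSpace ℝ (Fin n), V c ν) = f ν := by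
    intro ν hν
    apply le_antisymm
    · have hb : BddBelow (Set.range fun c => V c ν) := by
        refine ⟨f ν, ?_⟩
        rintro y ⟨c, rfl⟩
        exact hVge c ν hν
      refine (ciInf_le hb (b ν)).trans ?_
      rw [key (b ν) ν hν]
      simp
    · exact le_ciInf fun c => hVge c ν hν
  -- RHS equals f νs
  have hRHS : (⨆ ν : B, ⨅ c : EuclideanSpace ℝ (Fin n), V c ν) = f νs := by
    apply le_antisymm
    · refine ciSup_le fun ν => ?_
      show (⨅ c : EuclideanSpace ℝ (Fin n), V c ν) ≤ f νs
      rw [hinf ν ν.2]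
      exact hmax' ν ν.2
    · have hbdd : BddAbove (Set.range fun ν : B => ⨅ c : EuclideanSpace ℝ (Fin n), V c ν) := by
        refine ⟨f νs, ?_⟩
        rintro y ⟨ν, rfl⟩
        show (⨅ c : EuclideanSpace ℝ (Fin n), V c ν) ≤ f νs
        rw [hinf ν ν.2]
        exact hmax' ν ν.2
      have := le_ciSup hbdd (⟨νs, hνsB⟩ : B)
      rwa [hinf νs hνsB] at this
  -- sup over ν of V c ν is bounded
  have hsupbdd : ∀ c : EuclideanSpace ℝ (Fin n), BddAbove (Set.range fun ν : B => V c ν) := by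
    intro c
    have hcont : Continuous fun ν : Fin m → ℝ => V c ν := by
      have : (fun ν : Fin m → ℝ => V c ν)
          = fun ν => ∑ i, ν i * ∫ x, ‖x - c‖ ^ 2 ∂ p i := funext fun ν => hV c ν
      rw [this]
      exact continuous_finset_sum _ fun i _ => (continuous_apply i).mul continuous_const
    have himg : Set.range (fun ν : B => V c ν) = V c '' B := by
      ext y
      constructor
      · rintro ⟨ν, rfl⟩; exact ⟨ν, ν.2, rfl⟩
      · rintro ⟨x, hx, rfl⟩; exact ⟨⟨x, hx⟩, rfl⟩
    rw [himg]
    exact (hBcomp.image hcont).bddAbove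
  have hLHSge : ∀ c : EuclideanSpace ℝ (Fin n), f νs ≤ ⨆ ν : B, V c ν := fun c =>
    (hVge c νs hνsB).trans (le_ciSup (hsupbdd c) (⟨νs, hνsB⟩ : B))
  have hLHS : (⨅ c : EuclideanSpace ℝ (Fin n), ⨆ ν : B, V c ν) = f νs := by
    apply le_antisymm
    · have hb : BddBelow (Set.range fun c => ⨆ ν : B, V c ν) := by
        refine ⟨f νs, ?_⟩
        rintro y ⟨c, rfl⟩
        exact hLHSge c
      refine (ciInf_le hb (b νs)).trans ?_
      exact ciSup_le fun ν => claim ν ν.2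
    · exact le_ciInf hLHSge
  rw [hLHS, hRHS]
end

section
/- Let Θ be a finite set, μ a probability distribution on Θ, R ∈ [0,1], L : Θ → ℝ, and suppose L takes exactly two values L_max > L_min with Θmax the set of maximizers. Then the maximum of ∑_θ ν(θ)L(θ) over the TV ball of radius R around μ equals ∑_θ μ(θ)L(θ) + α·(L_max − L_min), where α = min(R, 1 − μ(Θmax)). -/
open Finset

open scoped Classical in
theorem stmt14 {Θ : Type*} [Fintype Θ]
    (μ : Θ → ℝ) (hμ : IsProbDist μ) (R : ℝ) (hR : R ∈ Set.Icc (0 : ℝ) 1)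
    (L : Θ → ℝ) (Lmax Lmin : ℝ) (hlt : Lmin < Lmax)
    (hvals : ∀ θ, L θ = Lmin ∨ L θ = Lmax)
    (hmaxne : ∃ θ, L θ = Lmax) (hminne : ∃ θ, L θ = Lmin)
    (α : ℝ)
    (hα : α = min R (1 - ∑ θ ∈ Finset.univ.filter (fun θ => L θ = Lmax), μ θ)) :
    sSup {x : ℝ | ∃ ν : Θ → ℝ, IsProbDist ν ∧ tvDist ν μ ≤ R ∧ x = ∑ θ, ν θ * L θ}
      = ∑ θ, μ θ * L θ + α * (Lmax - Lmin) := by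
  obtain ⟨hμ0, hμ1⟩ := hμ
  obtain ⟨hR0, hR1⟩ := hR
  set S : Finset Θ := Finset.univ.filter (fun θ => L θ = Lmax) with hS
  set m : ℝ := ∑ θ ∈ S, μ θ with hm
  have hgap : 0 < Lmax - Lmin := by linarith
  -- value formula for any function summing to 1
  have key : ∀ ν : Θ → ℝ, ∑ θ, ν θ = 1 →
      ∑ θ, ν θ * L θ = Lmin + (∑ θ ∈ S, ν θ) * (Lmax - Lmin) := by
    intro ν hν
    have hsplit : ∑ θ, ν θ * L θ = ∑ θ ∈ S, ν θ * L θ + ∑ θ ∈ Sᶜ, ν θ * L θ :=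
      (Finset.sum_add_sum_compl S _).symm
    have h1 : ∑ θ ∈ S, ν θ * L θ = (∑ θ ∈ S, ν θ) * Lmax := by
      rw [Finset.sum_mul]
      refine Finset.sum_congr rfl fun θ hθ => ?_
      simp only [hS, Finset.mem_filter] at hθ
      rw [hθ.2]
    have h2 : ∑ θ ∈ Sᶜ, ν θ * L θ = (∑ θ ∈ Sᶜ, ν θ) * Lmin := by
      rw [Finset.sum_mul]
      refine Finset.sum_congr rfl fun θ hθ => ?_
      simp only [hS, Finset.mem_compl, Finset.mem_filter, Finset.mem_univ, true_and] at hθ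
      rcases hvals θ with h | h
      · rw [h]
      · exact absurd h hθ
    have h3 : ∑ θ ∈ S, ν θ + ∑ θ ∈ Sᶜ, ν θ = 1 := by
      rw [Finset.sum_add_sum_compl, hν]
    have h4 : ∑ θ ∈ Sᶜ, ν θ = 1 - ∑ θ ∈ S, ν θ := by linarith
    rw [hsplit, h1, h2, h4]; ring
  have hm0 : 0 ≤ m := Finset.sum_nonneg fun θ _ => hμ0 θ
  have hm1 : m ≤ 1 := by
    rw [hm, ← hμ1]
    exact Finset.sum_le_sum_of_subset_of_nonneg (Finset.subset_univ S)
      (fun θ _ _ => hμ0 θ)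
  have hcompμ : ∑ θ ∈ Sᶜ, μ θ = 1 - m := by
    have := Finset.sum_add_sum_compl S μ
    rw [hμ1] at this; linarith
  have hα0 : 0 ≤ α := by rw [hα]; exact le_min hR0 (by linarith)
  have hαR : α ≤ R := by rw [hα]; exact min_le_left _ _
  have hα1 : α ≤ 1 - m := by rw [hα]; exact min_le_right _ _
  -- the target value
  have htarget : ∑ θ, μ θ * L θ + α * (Lmax - Lmin)
      = Lmin + (m + α) * (Lmax - Lmin) := by
    rw [key μ hμ1]; ring
  -- construct the maximizer
  obtain ⟨θ0, hθ0⟩ := hmaxne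
  set c : ℝ := α / (1 - m) with hcdef
  have hc : (1 - m) * c = α := by
    rcases eq_or_lt_of_le (by linarith : (0:ℝ) ≤ 1 - m) with h | h
    · have hz : α = 0 := le_antisymm (by linarith) hα0
      simp [hcdef, hz, ← h]
    · rw [hcdef, mul_comm, div_mul_cancel₀ _ (ne_of_gt h)]
  have h1m : 0 ≤ 1 - m := by linarith
  have hc0 : 0 ≤ c := div_nonneg hα0 h1m
  have hc1 : c ≤ 1 := by
    rcases eq_or_lt_of_le h1m with h | h
    · rw [hcdef, ← h]; simp
    · rw [hcdef]; exact div_le_one_of_le₀ hα1 (le_of_lt h)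
  set ν : Θ → ℝ := fun θ =>
    if L θ = Lmax then μ θ + (if θ = θ0 then α else 0) else μ θ * (1 - c) with hν
  have hνS : ∀ θ ∈ S, ν θ = μ θ + (if θ = θ0 then α else 0) := by
    intro θ hθ
    simp only [hS, Finset.mem_filter] at hθ
    simp [hν, hθ.2]
  have hνSc : ∀ θ ∈ Sᶜ, ν θ = μ θ * (1 - c) := by
    intro θ hθ
    simp only [hS, Finset.mem_compl, Finset.mem_filter, Finset.mem_univ, true_and] at hθ
    simp [hν, hθ]
  have hθ0S : θ0 ∈ S := by simp [hS, hθ0]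
  have hsumS : ∑ θ ∈ S, ν θ = m + α := by
    rw [Finset.sum_congr rfl hνS, Finset.sum_add_distrib, ← hm,
      Finset.sum_ite_eq' S θ0 (fun _ => α), if_pos hθ0S]
  have hsumSc : ∑ θ ∈ Sᶜ, ν θ = (1 - m) * (1 - c) := by
    rw [Finset.sum_congr rfl hνSc, ← Finset.sum_mul, hcompμ]
  have hνsum : ∑ θ, ν θ = 1 := by
    rw [← Finset.sum_add_sum_compl S, hsumS, hsumSc]
    have : (1 - m) * (1 - c) = (1 - m) - α := by rw [mul_sub, hc, mul_one]
    linarith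
  have hνnn : ∀ θ, 0 ≤ ν θ := by
    intro θ
    by_cases h : L θ = Lmax
    · simp only [hν, if_pos h]
      by_cases h' : θ = θ0
      · simp only [if_pos h']; subst h'; linarith [hμ0 θ]
      · simp only [if_neg h', add_zero]; exact hμ0 θ
    · simp only [hν, if_neg h]
      exact mul_nonneg (hμ0 θ) (by linarith)
  have htv : tvDist ν μ ≤ R := by
    have habs : ∑ θ, |ν θ - μ θ| = 2 * α := by
      rw [← Finset.sum_add_sum_compl S]
      have e1 : ∑ θ ∈ S, |ν θ - μ θ| = α := by
        have : ∀ θ ∈ S, |ν θ - μ θ| = (if θ = θ0 then α else 0) := by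
          intro θ hθ
          rw [hνS θ hθ]
          by_cases h' : θ = θ0 <;> simp [h', abs_of_nonneg hα0]
        rw [Finset.sum_congr rfl this, Finset.sum_ite_eq' S θ0 (fun _ => α),
          if_pos hθ0S]
      have e2 : ∑ θ ∈ Sᶜ, |ν θ - μ θ| = α := by
        have : ∀ θ ∈ Sᶜ, |ν θ - μ θ| = μ θ * c := by
          intro θ hθ
          rw [hνSc θ hθ]
          have : μ θ * (1 - c) - μ θ = -(μ θ * c) := by ring
          rw [this, abs_neg, abs_of_nonneg (mul_nonneg (hμ0 θ) hc0)]
        rw [Finset.sum_congr rfl this, ← Finset.sum_mul, hcompμ, hc]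
      rw [e1, e2]; ring
    rw [tvDist, habs]; linarith
  have hmem : ∑ θ, μ θ * L θ + α * (Lmax - Lmin) ∈
      {x : ℝ | ∃ ν : Θ → ℝ, IsProbDist ν ∧ tvDist ν μ ≤ R ∧ x = ∑ θ, ν θ * L θ} := by
    refine ⟨ν, ⟨hνnn, hνsum⟩, htv, ?_⟩
    rw [key ν hνsum, hsumS, htarget]
  -- upper bound
  have hub : ∀ x ∈ {x : ℝ | ∃ ν : Θ → ℝ, IsProbDist ν ∧ tvDist ν μ ≤ R ∧ x = ∑ θ, ν θ * L θ},
      x ≤ ∑ θ, μ θ * L θ + α * (Lmax - Lmin) := by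
    rintro x ⟨ρ, ⟨hρ0, hρ1⟩, hρtv, rfl⟩
    rw [key ρ hρ1, htarget]
    have hs1 : ∑ θ ∈ S, ρ θ ≤ 1 := by
      rw [← hρ1]
      exact Finset.sum_le_sum_of_subset_of_nonneg (Finset.subset_univ S)
        (fun θ _ _ => hρ0 θ)
    have hsR : ∑ θ ∈ S, ρ θ - m ≤ R := by
      have hcompρ : ∑ θ ∈ Sᶜ, ρ θ = 1 - ∑ θ ∈ S, ρ θ := by
        have := Finset.sum_add_sum_compl S ρ
        rw [hρ1] at this; linarith
      have a1 : ∑ θ ∈ S, (ρ θ - μ θ) ≤ ∑ θ ∈ S, |ρ θ - μ θ| :=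
        Finset.sum_le_sum fun θ _ => le_abs_self _
      have a2 : ∑ θ ∈ Sᶜ, (μ θ - ρ θ) ≤ ∑ θ ∈ Sᶜ, |ρ θ - μ θ| :=
        Finset.sum_le_sum fun θ _ =>
          (le_abs_self _).trans_eq (abs_sub_comm (μ θ) (ρ θ))
      have b1 : ∑ θ ∈ S, (ρ θ - μ θ) = ∑ θ ∈ S, ρ θ - m := by
        rw [Finset.sum_sub_distrib, hm]
      have b2 : ∑ θ ∈ Sᶜ, (μ θ - ρ θ) = ∑ θ ∈ S, ρ θ - m := by
        rw [Finset.sum_sub_distrib, hcompμ, hcompρ]; ring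
      have b3 : ∑ θ ∈ S, |ρ θ - μ θ| + ∑ θ ∈ Sᶜ, |ρ θ - μ θ| = ∑ θ, |ρ θ - μ θ| :=
        Finset.sum_add_sum_compl S _
      have htv' : (1 / 2) * ∑ θ, |ρ θ - μ θ| ≤ R := hρtv
      linarith
    have hsα : ∑ θ ∈ S, ρ θ ≤ m + α := by
      rw [hα]
      rcases le_total R (1 - m) with h | h
      · rw [min_eq_left h]; linarith
      · rw [min_eq_right h]; linarith
    nlinarith
  exact le_antisymm
    (csSup_le ⟨_, hmem⟩ hub)
    (le_csSup ⟨_, hub⟩ hmem)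
end
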